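/- Suppose P is a fully supported probability distribution of (x₁,…,x_M, y) on a finite product space, Q is the product of its marginals, and F is a function such that E_P[F] - log E_Q[e^F] = KL(P‖Q). Then for every (x₁,…,x_M), the conditional distribution satisfies P(y | x₁,…,x_M) = e^{F(x₁,…,x_M,y)} / Σ_{k∈Y} e^{F(x₁,…,x_M,k)}, i.e., the conditional law of y is the softmax of F over the label coordinate, provided the marginal of y under Q is uniform on Y. -/
import Mathlib


open Finset

/-- Marginal of the i-th modality of a joint distribution on (∀ i, Z i) × Y. -/
noncomputable def margMod {ι : Type*} [Fintype ι] [DecidableEq ι]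
    {Z : ι → Type*} [∀ i, Fintype (Z i)] [∀ i, DecidableEq (Z i)]
    {Y : Type*} [Fintype Y]
    (p : ((i : ι) → Z i) × Y → ℝ) (i : ι) (z : Z i) : ℝ :=
  ∑ x : ((i : ι) → Z i) × Y, if x.1 i = z then p x else 0

/-- Marginal of the label of a joint distribution on (∀ i, Z i) × Y. -/
noncomputable def margLabel {ι : Type*} [Fintype ι] [DecidableEq ι]
    {Z : ι → Type*} [∀ i, Fintype (Z i)] [∀ i, DecidableEq (Z i)]
    {Y : Type*} [Fintype Y] [DecidableEq Y]
    (p : ((i : ι) → Z i) × Y → ℝ) (y : Y) : ℝ :=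
  ∑ x : ((i : ι) → Z i) × Y, if x.2 = y then p x else 0

/-- Product of the marginals of a joint distribution on (∀ i, Z i) × Y. -/
noncomputable def prodMarg {ι : Type*} [Fintype ι] [DecidableEq ι]
    {Z : ι → Type*} [∀ i, Fintype (Z i)] [∀ i, DecidableEq (Z i)]
    {Y : Type*} [Fintype Y] [DecidableEq Y]
    (p : ((i : ι) → Z i) × Y → ℝ) : ((i : ι) → Z i) × Y → ℝ :=
  fun x => (∏ i, margMod p i (x.1 i)) * margLabel p x.2

/-- Total correlation of (z_1, …, z_M, y): the KL divergence between the joint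
distribution and the product of its marginals. -/
noncomputable def totalCorr {ι : Type*} [Fintype ι] [DecidableEq ι]
    {Z : ι → Type*} [∀ i, Fintype (Z i)] [∀ i, DecidableEq (Z i)]
    {Y : Type*} [Fintype Y] [DecidableEq Y]
    (p : ((i : ι) → Z i) × Y → ℝ) : ℝ :=
  ∑ x, p x * Real.log (p x / prodMarg p x)

/-- If the Donsker–Varadhan bound for F is tight, i.e.
E_P[F] - log E_Q[e^F] = KL(P‖Q) = TC, and the label marginal is uniform, then
the conditional law of y given (x₁,…,x_M) is the softmax of F over the label. -/
theorem conditional_is_softmax_of_dv_tight {ι : Type*} [Fintype ι] [DecidableEq ι]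
    {X : ι → Type*} [∀ i, Fintype (X i)] [∀ i, DecidableEq (X i)]
    {Y : Type*} [Fintype Y] [DecidableEq Y]
    (p : ((i : ι) → X i) × Y → ℝ)
    (hp : ∀ x, 0 < p x) (hp1 : ∑ x, p x = 1)
    (huniform : ∀ y : Y, margLabel p y = 1 / (Fintype.card Y : ℝ))
    (F : ((i : ι) → X i) × Y → ℝ)
    (htight : (∑ x, p x * F x) - Real.log (∑ x, prodMarg p x * Real.exp (F x))
        = totalCorr p) :
    ∀ (xs : (i : ι) → X i) (y : Y),
      p (xs, y) / ∑ k : Y, p (xs, k)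
        = Real.exp (F (xs, y)) / ∑ k : Y, Real.exp (F (xs, k)) := by

  classical
  intro xs y
  haveI : Nonempty Y := ⟨y⟩
  haveI : Nonempty ((i : ι) → X i) := ⟨xs⟩
  have hcard : (0:ℝ) < (Fintype.card Y : ℝ) := by exact_mod_cast Fintype.card_pos
  -- positivity of marginals
  have hmod : ∀ (i : ι) (z : X i), 0 < margMod p i z := by
    intro i z
    unfold margMod
    apply Finset.sum_pos'
    · intro x _
      split_ifs
      · exact (hp x).le
      · exact le_refl 0
    · refine ⟨(Function.update xs i z, y), Finset.mem_univ _, ?_⟩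
      simp [Function.update_self, hp]
  have hlab : ∀ y' : Y, 0 < margLabel p y' := by
    intro y'; rw [huniform]; positivity
  have hq : ∀ x, 0 < prodMarg p x := by
    intro x
    exact mul_pos (Finset.prod_pos fun i _ => hmod i _) (hlab _)
  set Z : ℝ := ∑ x, prodMarg p x * Real.exp (F x) with hZdef
  have hZ : 0 < Z := by
    apply Finset.sum_pos
    · intro x _; exact mul_pos (hq x) (Real.exp_pos _)
    · exact Finset.univ_nonempty
  set g : ((i : ι) → X i) × Y → ℝ := fun x => prodMarg p x * Real.exp (F x) / Z with hgdef
  have hg : ∀ x, 0 < g x := fun x => div_pos (mul_pos (hq x) (Real.exp_pos _)) hZ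
  have hgsum : ∑ x, g x = 1 := by
    rw [hgdef]
    simp only []
    rw [← Finset.sum_div, ← hZdef, div_self hZ.ne']
  -- rewrite tightness as KL(p‖g) = 0
  have hlog : ∀ x, Real.log (p x / g x)
      = Real.log (p x / prodMarg p x) - F x + Real.log Z := by
    intro x
    have h1 : p x / g x = p x * Z / (prodMarg p x * Real.exp (F x)) := by
      rw [hgdef]; rw [div_div_eq_mul_div]
    rw [h1, Real.log_div (mul_pos (hp x) hZ).ne' (mul_pos (hq x) (Real.exp_pos _)).ne',
      Real.log_mul (hp x).ne' hZ.ne',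
      Real.log_mul (hq x).ne' (Real.exp_ne_zero _), Real.log_exp,
      Real.log_div (hp x).ne' (hq x).ne']
    ring
  have hzero : ∑ x, p x * Real.log (p x / g x) = 0 := by
    have : ∑ x, p x * Real.log (p x / g x)
        = totalCorr p - (∑ x, p x * F x) + (∑ x, p x) * Real.log Z := by
      simp only [hlog, mul_sub, mul_add]
      rw [Finset.sum_add_distrib, Finset.sum_sub_distrib, ← Finset.sum_mul]
      rfl
    rw [this, hp1]
    linarith
  -- equality case of Gibbs' inequality: p = g
  have hpg : ∀ x, p x = g x := by
    have hnn : ∀ x ∈ Finset.univ,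
        0 ≤ g x - p x - p x * Real.log (g x / p x) := by
      intro x _
      have h1 : Real.log (g x / p x) ≤ g x / p x - 1 :=
        Real.log_le_sub_one_of_pos (div_pos (hg x) (hp x))
      have h2 : p x * Real.log (g x / p x) ≤ p x * (g x / p x - 1) :=
        mul_le_mul_of_nonneg_left h1 (hp x).le
      have h3 : p x * (g x / p x - 1) = g x - p x := by
        rw [mul_sub, mul_div_cancel₀ _ (hp x).ne', mul_one]
      linarith
    have hsum : ∑ x, (g x - p x - p x * Real.log (g x / p x)) = 0 := by
      have hflip : ∀ x : ((i : ι) → X i) × Y,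
          Real.log (g x / p x) = - Real.log (p x / g x) := by
        intro x
        rw [← Real.log_inv, inv_div]
      simp only [hflip, mul_neg, sub_neg_eq_add]
      rw [Finset.sum_add_distrib, Finset.sum_sub_distrib, hgsum, hp1, hzero]
      ring
    have hall := (Finset.sum_eq_zero_iff_of_nonneg hnn).mp hsum
    intro x
    by_contra hne
    have hx := hall x (Finset.mem_univ x)
    have hne1 : g x / p x ≠ 1 := by
      intro h
      exact hne ((div_eq_one_iff_eq (hp x).ne').mp h).symm
    have h1 : Real.log (g x / p x) < g x / p x - 1 :=
      Real.log_lt_sub_one_of_pos (div_pos (hg x) (hp x)) hne1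
    have h2 : p x * Real.log (g x / p x) < p x * (g x / p x - 1) :=
      (mul_lt_mul_iff_right₀ (hp x)).mpr h1
    have h3 : p x * (g x / p x - 1) = g x - p x := by
      rw [mul_sub, mul_div_cancel₀ _ (hp x).ne', mul_one]
    linarith
  -- conclude
  set C : ℝ := (∏ i, margMod p i (xs i)) * (1 / (Fintype.card Y : ℝ)) / Z with hCdef
  have hC : 0 < C := by
    apply div_pos _ hZ
    exact mul_pos (Finset.prod_pos fun i _ => hmod i _) (by positivity)
  have hgk : ∀ k : Y, p (xs, k) = C * Real.exp (F (xs, k)) := by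
    intro k
    rw [hpg (xs, k), hgdef, hCdef]
    simp only [prodMarg]
    rw [huniform k]
    ring
  simp only [hgk]
  rw [← Finset.mul_sum, mul_div_mul_left _ _ hC.ne']
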